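/- arXiv:1501.02522 — 3 statements merged into one kernel-verified Lean document; each statement's English description precedes it below -/
import Mathlib

section
/- Let A be a self-adjoint operator on a complex Hilbert space H, and let R_t be a one-parameter family of vectors in H such that (i) R_t is twice differentiable in t, (ii) R_0 = 0 and (dR_t/dt)|_{t=0} = 0, (iii) R_t lies in the domain of A for all t, and (iv) d²R_t/dt² = -A R_t for all t. Then R_t = 0 for all t. -/
open scoped InnerProductSpace

/-- **Uniqueness lemma (Lemma 1 of Prabhu–Wald).**
Let `A` be a self-adjoint (possibly unbounded, densely defined) operator on a complex
Hilbert space `H`, and let `R t` be a one-parameter family of vectors in `H` such that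
(i) `R` is twice differentiable in `t` (with first derivative `R'` and second derivative `R''`),
(ii) `R 0 = 0` and `R' 0 = 0`, (iii) `R t` lies in the domain of `A` for all `t`, and
(iv) `R'' t = - A (R t)` for all `t`.  Then `R t = 0` for all `t`. -/
theorem uniqueness_of_second_order_hilbert_ode
    {H : Type*} [NormedAddCommGroup H] [InnerProductSpace ℂ H] [CompleteSpace H]
    (A : H →ₗ.[ℂ] H) (hA : IsSelfAdjoint A)
    (R R' R'' : ℝ → H)
    (hdom : ∀ t, R t ∈ A.domain)
    (hd1 : ∀ t, HasDerivAt R (R' t) t)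
    (hd2 : ∀ t, HasDerivAt R' (R'' t) t)
    (h0 : R 0 = 0) (h0' : R' 0 = 0)
    (hode : ∀ t, R'' t = -A ⟨R t, hdom t⟩) :
    ∀ t, R t = 0 := by
  classical
  -- Symmetry of `A` on its domain, from self-adjointness.
  have hdense : Dense (A.domain : Set H) := hA.dense_domain
  have hadj : A.adjoint = A := hA
  have hle : A ≤ A.adjoint := le_of_eq hadj.symm
  have hsym : ∀ x y : A.domain, (inner ℂ ((A x : H)) (y : H) : ℂ) = inner ℂ (x : H) (A y : H) := by
    intro x y
    have h1 := LinearPMap.adjoint_isFormalAdjoint hdense (Submodule.inclusion hle.1 x) y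
    rwa [← LinearPMap.apply_comp_inclusion hle x] at h1
  -- Derivative of `fun t => R (s - t)` is `-(R' (s - t))`, etc.
  have hR1 : ∀ s t : ℝ, HasDerivAt (fun t => R (s - t)) (-(R' (s - t))) t := by
    intro s t
    have h := (hd1 (s - t)).scomp t ((hasDerivAt_id t).const_sub s)
    simpa [Function.comp_def] using h
  have hR2 : ∀ s t : ℝ, HasDerivAt (fun t => R' (s - t)) (-(R'' (s - t))) t := by
    intro s t
    have h := (hd2 (s - t)).scomp t ((hasDerivAt_id t).const_sub s)
    simpa [Function.comp_def] using h
  -- For each `s`, the function ψ has zero derivative.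
  set ψ : ℝ → ℝ → ℂ := fun s t =>
    (inner ℂ (R' t) (R (s - t)) : ℂ) + (inner ℂ (R t) (R' (s - t)) : ℂ) with hψ
  have hderiv : ∀ s t : ℝ, HasDerivAt (ψ s) 0 t := by
    intro s t
    have h1 := (hd2 t).inner ℂ (hR1 s t)
    have h2 := (hd1 t).inner ℂ (hR2 s t)
    have h := h1.add h2
    convert h using 1
    · rfl
    · rfl
    have hs : (inner ℂ ((A ⟨R t, hdom t⟩ : H)) (R (s - t)) : ℂ)
        = inner ℂ (R t) ((A ⟨R (s - t), hdom (s - t)⟩ : H)) :=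
      hsym ⟨R t, hdom t⟩ ⟨R (s - t), hdom (s - t)⟩
    rw [hode t, hode (s - t)]
    simp only [inner_neg_left, inner_neg_right, hs]
    ring
  -- Hence ψ s is constant; its value at `t` equals its value at `0`, which is `0`.
  have hconst : ∀ s t : ℝ, ψ s t = ψ s 0 := by
    intro s t
    refine is_const_of_deriv_eq_zero (fun x => (hderiv s x).differentiableAt) ?_ t 0
    intro x
    exact (hderiv s x).deriv
  have hzero : ∀ u : ℝ, (inner ℂ (R' u) (R u) : ℂ) + (inner ℂ (R u) (R' u) : ℂ) = 0 := by
    intro u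
    have h := hconst (2 * u) u
    have h2u : 2 * u - u = u := by ring
    have h2u0 : 2 * u - 0 = 2 * u := by ring
    simp only [hψ, h2u, h2u0] at h
    rw [h, h0, h0']
    simp
  -- The function `t ↦ ⟪R t, R t⟫` has zero derivative.
  have hnorm : ∀ t : ℝ, HasDerivAt (fun t => (inner ℂ (R t) (R t) : ℂ)) 0 t := by
    intro t
    have h := (hd1 t).inner ℂ (hd1 t)
    have hz : (inner ℂ (R t) (R' t) : ℂ) + (inner ℂ (R' t) (R t) : ℂ) = 0 := by
      rw [add_comm]; exact hzero t
    rw [hz] at h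
    exact h
  -- Hence it is constant, equal to its value `0` at `t = 0`.
  intro t
  have h := is_const_of_deriv_eq_zero (f := fun t => (inner ℂ (R t) (R t) : ℂ))
    (fun x => (hnorm x).differentiableAt) (fun x => (hnorm x).deriv) t 0
  rw [h0] at h
  simp only [inner_zero_left] at h
  exact inner_self_eq_zero.mp h
end

section
/- Let A be a self-adjoint operator on a complex Hilbert space H and let Q₀ ∈ dom(A) satisfy ⟨Q₀, A Q₀⟩ < 0. Then the solution Q_t of d²Q_t/dt² = -A Q_t with initial data Q_0 = Q₀, (dQ_t/dt)|_{t=0} = 0 grows exponentially: there exist constants C > 0 and α > 0 such that ‖Q_t‖ > C e^{α t} for all t ≥ 0. -/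
open scoped InnerProductSpace

section Helpers

lemma pw_const_of_hasDerivAt_zero {f : ℝ → ℝ} (h : ∀ s, HasDerivAt f 0 s) (s : ℝ) :
    f s = f 0 :=
  is_const_of_deriv_eq_zero (fun x => (h x).differentiableAt) (fun x => (h x).deriv) s 0

lemma pw_le_on_Ici {f f' : ℝ → ℝ} (hd : ∀ s, HasDerivAt f (f' s) s)
    (h' : ∀ s, 0 ≤ s → 0 ≤ f' s) {t : ℝ} (ht : 0 ≤ t) : f 0 ≤ f t := by
  have hm : MonotoneOn f (Set.Ici (0:ℝ)) := by
    apply monotoneOn_of_deriv_nonneg (convex_Ici 0)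
    · exact fun x _ => ((hd x).differentiableAt.continuousAt).continuousWithinAt
    · exact fun x _ => ((hd x).differentiableAt).differentiableWithinAt
    · intro x hx
      rw [interior_Ici] at hx
      rw [(hd x).deriv]
      exact h' x (le_of_lt hx)
  exact hm Set.self_mem_Ici ht ht

lemma pw_le_on_Iic {f f' : ℝ → ℝ} (hd : ∀ s, HasDerivAt f (f' s) s)
    (h' : ∀ s, s ≤ 0 → f' s ≤ 0) {t : ℝ} (ht : t ≤ 0) : f 0 ≤ f t := by
  have hm : AntitoneOn f (Set.Iic (0:ℝ)) := by
    apply antitoneOn_of_deriv_nonpos (convex_Iic 0)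
    · exact fun x _ => ((hd x).differentiableAt.continuousAt).continuousWithinAt
    · exact fun x _ => ((hd x).differentiableAt).differentiableWithinAt
    · intro x hx
      rw [interior_Iic] at hx
      rw [(hd x).deriv]
      exact h' x (le_of_lt hx)
  exact hm ht Set.self_mem_Iic ht

lemma pw_nonneg_on_Ici {f f' : ℝ → ℝ} (hd : ∀ s, HasDerivAt f (f' s) s)
    (h0 : 0 ≤ f 0) (h' : ∀ s, 0 ≤ s → 0 ≤ f' s) {t : ℝ} (ht : 0 ≤ t) : 0 ≤ f t :=
  h0.trans (pw_le_on_Ici hd h' ht)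

lemma hasDerivAt_re_inner {H : Type*} [NormedAddCommGroup H] [InnerProductSpace ℂ H]
    {f g : ℝ → H} {f' g' : H} {t : ℝ}
    (hf : HasDerivAt f f' t) (hg : HasDerivAt g g' t) :
    HasDerivAt (fun s => (⟪f s, g s⟫_ℂ).re) ((⟪f t, g'⟫_ℂ).re + (⟪f', g t⟫_ℂ).re) t := by
  have h1 : HasDerivAt (fun s => ⟪f s, g s⟫_ℂ) (⟪f t, g'⟫_ℂ + ⟪f', g t⟫_ℂ) t :=
    hf.inner ℂ hg
  have h2 := (Complex.reCLM.hasFDerivAt (x := ⟪f t, g t⟫_ℂ)).comp_hasDerivAt t h1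
  simpa [Function.comp_def] using h2

lemma hasDerivAt_shift {H : Type*} [NormedAddCommGroup H] [NormedSpace ℝ H]
    {f : ℝ → H} {f' : H} {τ s : ℝ}
    (h : HasDerivAt f f' (s + τ)) : HasDerivAt (fun u => f (u + τ)) f' s := by
  have h2 : HasDerivAt (fun u : ℝ => u + τ) 1 s := (hasDerivAt_id s).add_const τ
  simpa [Function.comp_def] using h.scomp s h2

lemma hasDerivAt_shift0 {H : Type*} [NormedAddCommGroup H] [NormedSpace ℝ H]
    {f : ℝ → H} {f' : H} {s : ℝ}
    (h : HasDerivAt f f' s) : HasDerivAt (fun τ => f (s + τ)) f' 0 := by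
  have h' : HasDerivAt f f' (s + 0) := by simpa using h
  have h2 : HasDerivAt (fun τ : ℝ => s + τ) 1 0 := (hasDerivAt_id 0).const_add s
  simpa [Function.comp_def] using h'.scomp 0 h2

lemma re_inner_symm' {H : Type*} [NormedAddCommGroup H] [InnerProductSpace ℂ H] (x y : H) :
    (⟪x, y⟫_ℂ).re = (⟪y, x⟫_ℂ).re := by
  have := inner_re_symm (𝕜 := ℂ) x y
  simpa using this

lemma re_inner_self {H : Type*} [NormedAddCommGroup H] [InnerProductSpace ℂ H] (x : H) :
    (⟪x, x⟫_ℂ).re = ‖x‖^2 := by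
  have := inner_self_eq_norm_sq (𝕜 := ℂ) x
  simpa using this

lemma re_inner_sq_le {H : Type*} [NormedAddCommGroup H] [InnerProductSpace ℂ H] (x y : H) :
    ((⟪x, y⟫_ℂ).re)^2 ≤ ‖x‖^2 * ‖y‖^2 := by
  have h1 : |(⟪x, y⟫_ℂ).re| ≤ ‖⟪x, y⟫_ℂ‖ := Complex.abs_re_le_norm _
  have h2 : ‖⟪x, y⟫_ℂ‖ ≤ ‖x‖ * ‖y‖ := norm_inner_le_norm x y
  nlinarith [abs_nonneg (⟪x, y⟫_ℂ).re, sq_abs (⟪x, y⟫_ℂ).re, norm_nonneg x, norm_nonneg y]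

end Helpers

set_option maxHeartbeats 1000000 in
/-- **Proposition 3 of Prabhu–Wald (exponential growth from negative energy).**
Let `A` be a self-adjoint operator on a complex Hilbert space `H` and let `Q₀ ∈ dom A`
satisfy `⟨Q₀, A Q₀⟩ < 0`.  Then the solution `Q t` of `Q̈ = -A Q` with initial data
`Q 0 = Q₀`, `Q̇ 0 = 0` grows exponentially: there exist `C > 0` and `α > 0` such that
`‖Q t‖ > C e^{α t}` for all `t ≥ 0`. -/
theorem exponential_growth_of_negative_energy
    {H : Type*} [NormedAddCommGroup H] [InnerProductSpace ℂ H] [CompleteSpace H]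
    (A : H →ₗ.[ℂ] H) (hA : IsSelfAdjoint A)
    (Q Q' Q'' : ℝ → H)
    (hdom : ∀ t, Q t ∈ A.domain)
    (hd1 : ∀ t, HasDerivAt Q (Q' t) t)
    (hd2 : ∀ t, HasDerivAt Q' (Q'' t) t)
    (h0' : Q' 0 = 0)
    (hode : ∀ t, Q'' t = -A ⟨Q t, hdom t⟩)
    (hneg : (⟪Q 0, A ⟨Q 0, hdom 0⟩⟫_ℂ).re < 0) :
    ∃ C > (0:ℝ), ∃ α > (0:ℝ), ∀ t ≥ (0:ℝ), C * Real.exp (α * t) < ‖Q t‖ := by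
  classical
  -- symmetry of A transferred to Q''
  have hsym : ∀ s t : ℝ, ⟪Q'' s, Q t⟫_ℂ = ⟪Q s, Q'' t⟫_ℂ := by
    intro s t
    have hd := hA.dense_domain
    have h := LinearPMap.adjoint_isFormalAdjoint hd
    rw [LinearPMap.isSelfAdjoint_def] at hA
    rw [hA] at h
    have hst := h ⟨Q s, hdom s⟩ ⟨Q t, hdom t⟩
    rw [hode s, hode t, inner_neg_left, inner_neg_right]
    exact congrArg Neg.neg hst
  -- basic real functions
  set R : ℝ → ℝ := fun t => (⟪Q t, Q' t⟫_ℂ).re with hR_def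
  set K : ℝ → ℝ := fun t => (⟪Q' t, Q' t⟫_ℂ).re with hK_def
  set N : ℝ → ℝ := fun t => (⟪Q t, Q t⟫_ℂ).re with hN_def
  have hKnorm : ∀ t, K t = ‖Q' t‖^2 := fun t => re_inner_self _
  have hNnorm : ∀ t, N t = ‖Q t‖^2 := fun t => re_inner_self _
  have hKnn : ∀ t, 0 ≤ K t := fun t => by rw [hKnorm t]; positivity
  have hK0 : K 0 = 0 := by simp [hK_def, h0']
  have hR0 : R 0 = 0 := by simp [hR_def, h0']
  -- the constant a
  set a : ℝ := -(⟪Q 0, A ⟨Q 0, hdom 0⟩⟫_ℂ).re with ha_def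
  have ha : 0 < a := by rw [ha_def]; linarith
  have hQ''0 : (⟪Q 0, Q'' 0⟫_ℂ).re = a := by
    rw [hode 0, inner_neg_right, Complex.neg_re, ha_def]
  -- Wronskian identity
  have hW : ∀ τ s : ℝ,
      (⟪Q s, Q' (s + τ)⟫_ℂ).re - (⟪Q' s, Q (s + τ)⟫_ℂ).re = (⟪Q 0, Q' τ⟫_ℂ).re := by
    intro τ s
    have hder : ∀ u : ℝ, HasDerivAt
        (fun v => (⟪Q v, Q' (v + τ)⟫_ℂ).re - (⟪Q' v, Q (v + τ)⟫_ℂ).re) 0 u := by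
      intro u
      have d1 : HasDerivAt (fun v => (⟪Q v, Q' (v + τ)⟫_ℂ).re)
          ((⟪Q u, Q'' (u + τ)⟫_ℂ).re + (⟪Q' u, Q' (u + τ)⟫_ℂ).re) u :=
        hasDerivAt_re_inner (hd1 u) (hasDerivAt_shift (hd2 (u + τ)))
      have d2 : HasDerivAt (fun v => (⟪Q' v, Q (v + τ)⟫_ℂ).re)
          ((⟪Q' u, Q' (u + τ)⟫_ℂ).re + (⟪Q'' u, Q (u + τ)⟫_ℂ).re) u :=
        hasDerivAt_re_inner (hd2 u) (hasDerivAt_shift (hd1 (u + τ)))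
      have d3 := d1.sub d2
      have hval : (⟪Q u, Q'' (u + τ)⟫_ℂ).re + (⟪Q' u, Q' (u + τ)⟫_ℂ).re
          - ((⟪Q' u, Q' (u + τ)⟫_ℂ).re + (⟪Q'' u, Q (u + τ)⟫_ℂ).re) = 0 := by
        rw [hsym u (u + τ)]
        ring
      rwa [hval] at d3
    have hconst := pw_const_of_hasDerivAt_zero hder s
    simpa [h0'] using hconst
  -- energy conservation
  have hE : ∀ s : ℝ, (⟪Q s, Q'' s⟫_ℂ).re = a + K s := by
    intro s
    have hfun : (fun τ => (⟪Q s, Q' (s + τ)⟫_ℂ).re - (⟪Q' s, Q (s + τ)⟫_ℂ).re)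
        = fun τ => (⟪Q 0, Q' τ⟫_ℂ).re := funext fun τ => hW τ s
    have dL : HasDerivAt
        (fun τ => (⟪Q s, Q' (s + τ)⟫_ℂ).re - (⟪Q' s, Q (s + τ)⟫_ℂ).re)
        (((⟪Q s, Q'' s⟫_ℂ).re + (⟪(0:H), Q' (s + 0)⟫_ℂ).re)
          - ((⟪Q' s, Q' s⟫_ℂ).re + (⟪(0:H), Q (s + 0)⟫_ℂ).re)) 0 := by
      exact (hasDerivAt_re_inner (hasDerivAt_const 0 (Q s)) (hasDerivAt_shift0 (hd2 s))).sub
        (hasDerivAt_re_inner (hasDerivAt_const 0 (Q' s)) (hasDerivAt_shift0 (hd1 s)))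
    have dR : HasDerivAt (fun τ => (⟪Q 0, Q' τ⟫_ℂ).re)
        ((⟪Q 0, Q'' 0⟫_ℂ).re + (⟪(0:H), Q' 0⟫_ℂ).re) 0 :=
      hasDerivAt_re_inner (hasDerivAt_const 0 (Q 0)) (hd2 0)
    rw [hfun] at dL
    have := dL.unique dR
    simp only [inner_zero_left, Complex.zero_re, add_zero] at this
    rw [hQ''0] at this
    have hKs : (⟪Q' s, Q' s⟫_ℂ).re = K s := rfl
    linarith [this]
  -- derivatives of R and N
  have hRd : ∀ t, HasDerivAt R (a + 2 * K t) t := by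
    intro t
    have h := hasDerivAt_re_inner (hd1 t) (hd2 t)
    have hval : (⟪Q t, Q'' t⟫_ℂ).re + (⟪Q' t, Q' t⟫_ℂ).re = a + 2 * K t := by
      rw [hE t]; have : (⟪Q' t, Q' t⟫_ℂ).re = K t := rfl; rw [this]; ring
    rwa [hval] at h
  have hNd : ∀ t, HasDerivAt N (2 * R t) t := by
    intro t
    have h := hasDerivAt_re_inner (hd1 t) (hd1 t)
    have hval : (⟪Q t, Q' t⟫_ℂ).re + (⟪Q' t, Q t⟫_ℂ).re = 2 * R t := by
      rw [re_inner_symm' (Q' t) (Q t)]; ring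
    rwa [hval] at h
  -- sign facts for R and positivity of N
  have hRpos : ∀ s, 0 ≤ s → 0 ≤ R s := by
    intro s hs
    have := pw_le_on_Ici hRd (fun u _ => by nlinarith [hKnn u]) hs
    linarith [hR0]
  have hRneg : ∀ s, s ≤ 0 → R s ≤ 0 := by
    intro s hs
    have hmono : Monotone R :=
      monotone_of_deriv_nonneg (fun u => (hRd u).differentiableAt)
        (fun u => by rw [(hRd u).deriv]; nlinarith [hKnn u])
    have := hmono hs
    linarith [hR0]
  have hN0pos : 0 < N 0 := by
    rw [hNnorm 0]
    have hQ0 : Q 0 ≠ 0 := by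
      intro h
      have h1 : (⟨Q 0, hdom 0⟩ : A.domain) = 0 := by
        ext; simp [h]
      rw [h1] at hneg
      simp at hneg
    exact pow_pos (norm_pos_iff.mpr hQ0) 2
  have hNge : ∀ t, N 0 ≤ N t := by
    intro t
    rcases le_or_gt 0 t with ht | ht
    · exact pw_le_on_Ici hNd (fun s hs => by nlinarith [hRpos s hs]) ht
    · exact pw_le_on_Iic hNd (fun s hs => by nlinarith [hRneg s hs]) ht.le
  have hNpos : ∀ t, 0 < N t := fun t => lt_of_lt_of_le hN0pos (hNge t)
  -- Cauchy-Schwarz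
  have hCS : ∀ t, (R t)^2 ≤ N t * K t := by
    intro t
    have := re_inner_sq_le (Q t) (Q' t)
    rw [← hNnorm t, ← hKnorm t] at this
    exact this
  -- Gronwall claim 1 : R t ^ 2 ≥ b * (N t - N 0) * N t on t ≥ 0
  set b : ℝ := a / N 0 with hb_def
  have hb : 0 < b := div_pos ha hN0pos
  have habN : a = b * N 0 := by rw [hb_def]; exact (div_mul_cancel₀ a hN0pos.ne').symm
  have claim1 : ∀ t, 0 ≤ t → b * (N t - N 0) * N t ≤ (R t)^2 := by
    intro t ht
    set φ : ℝ → ℝ := fun u => (R u)^2 / (N u)^2 - b + b * N 0 / N u with hφ_def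
    have hφd : ∀ u, HasDerivAt φ
        ((2 * R u * (a + 2 * K u) * (N u)^2 - (R u)^2 * (2 * N u * (2 * R u))) / ((N u)^2)^2
          + (0 * N u - b * N 0 * (2 * R u)) / (N u)^2) u := by
      intro u
      have hNne : N u ≠ 0 := (hNpos u).ne'
      have h1 : HasDerivAt (fun v => (R v)^2) (2 * R u * (a + 2 * K u)) u := by
        simpa [Pi.pow_def] using (hRd u).pow 2
      have h2 : HasDerivAt (fun v => (N v)^2) (2 * N u * (2 * R u)) u := by
        simpa [Pi.pow_def] using (hNd u).pow 2
      have h3 := h1.div h2 (pow_ne_zero 2 hNne)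
      have h4 := (hasDerivAt_const u (b * N 0)).div (hNd u) hNne
      exact (h3.sub_const b).add h4
    have hφ0 : 0 ≤ φ 0 := by
      rw [hφ_def]
      simp only [hR0]
      have : (0:ℝ)^2 / (N 0)^2 - b + b * N 0 / N 0 = 0 := by
        field_simp
        ring
      rw [this]
    have hφ' : ∀ u, 0 ≤ u →
        0 ≤ (2 * R u * (a + 2 * K u) * (N u)^2 - (R u)^2 * (2 * N u * (2 * R u))) / ((N u)^2)^2
          + (0 * N u - b * N 0 * (2 * R u)) / (N u)^2 := by
      intro u hu
      have hNu := hNpos u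
      have hRu := hRpos u hu
      have hKu := hKnn u
      have hCSu := hCS u
      have hNgeu := hNge u
      rw [div_add_div _ _ (by positivity) (by positivity)]
      apply div_nonneg _ (by positivity)
      have key : 0 ≤ 2 * R u * ((a + 2 * K u) * N u - 2 * (R u)^2 - b * N 0 * N u) := by
        apply mul_nonneg (by linarith)
        have h5 : (R u)^2 ≤ N u * K u := hCSu
        have h6 : a = b * N 0 := habN
        nlinarith
      nlinarith [key, sq_nonneg (N u), hNu]
    have := pw_nonneg_on_Ici hφd hφ0 hφ' ht
    rw [hφ_def] at this
    have hNt := hNpos t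
    have h7 : 0 ≤ (R t)^2 / (N t)^2 - b + b * N 0 / N t := this
    have h8 : (R t)^2 / (N t)^2 - b + b * N 0 / N t
        = ((R t)^2 - b * (N t - N 0) * N t) / (N t)^2 := by
      field_simp
      ring
    rw [h8] at h7
    rcases div_nonneg_iff.mp h7 with ⟨h9, _⟩ | ⟨_, h10⟩
    · linarith
    · nlinarith [hNt]
  -- the norm function w and its derivative
  set w : ℝ → ℝ := fun t => Real.sqrt (N t) with hw_def
  have hwpos : ∀ t, 0 < w t := fun t => Real.sqrt_pos.mpr (hNpos t)
  have hwsq : ∀ t, (w t)^2 = N t := fun t => Real.sq_sqrt (hNpos t).le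
  have hwnorm : ∀ t, w t = ‖Q t‖ := by
    intro t
    rw [hw_def]
    simp only
    rw [hNnorm t, Real.sqrt_sq (norm_nonneg _)]
  set W : ℝ → ℝ := fun t => R t / w t with hWf_def
  have hwd : ∀ t, HasDerivAt w (W t) t := by
    intro t
    have h := (hNd t).sqrt (hNpos t).ne'
    have h2 : 2 * R t / (2 * Real.sqrt (N t)) = R t / Real.sqrt (N t) :=
      mul_div_mul_left _ _ two_ne_zero
    rw [h2] at h
    exact h
  have hWd : ∀ t, HasDerivAt W (((a + 2 * K t) * w t - R t * W t) / (w t)^2) t :=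
    fun t => (hRd t).div (hwd t) (hwpos t).ne'
  -- key differential inequality for W' on t ≥ 0
  have hkey : ∀ t, 0 ≤ t → b * w t ≤ ((a + 2 * K t) * w t - R t * W t) / (w t)^2 := by
    intro t ht
    have hNt := hNpos t
    have hz : 0 < w t := hwpos t
    have hsq := hwsq t
    have hc1 := claim1 t ht
    have hcs := hCS t
    have key2 : b * (N t)^2 ≤ (a + 2 * K t) * N t - (R t)^2 := by
      rw [habN]
      nlinarith [hc1, hcs, hNt]
    rw [le_div_iff₀ (by positivity)]
    have e1 : (a + 2 * K t) * w t - R t * W t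
        = ((a + 2 * K t) * N t - (R t)^2) / w t := by
      rw [hWf_def]
      simp only
      rw [← hsq]
      field_simp
    rw [e1, ← hsq, le_div_iff₀ hz]
    have e4 : b * w t * w t ^ 2 * w t = b * (N t)^2 := by
      rw [← hsq]; ring
    rw [e4, hsq]
    linarith [key2]
  -- comparison with w0 * cosh (β t)
  set β : ℝ := Real.sqrt b with hβ_def
  have hβpos : 0 < β := Real.sqrt_pos.mpr hb
  have hβsq : β^2 = b := Real.sq_sqrt hb.le
  set w0 : ℝ := w 0 with hw0_def
  have hw0pos : 0 < w0 := hwpos 0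
  have hW0 : W 0 = 0 := by rw [hWf_def]; simp only; rw [hR0]; simp
  have hcoshd : ∀ t : ℝ, HasDerivAt (fun u => Real.cosh (β * u)) (β * Real.sinh (β * t)) t := by
    intro t
    have h1 : HasDerivAt (fun u : ℝ => β * u) β t := by
      simpa using (hasDerivAt_id t).const_mul β
    have h2 := (Real.hasDerivAt_cosh (β * t)).comp t h1
    rw [mul_comm] at h2
    exact h2
  have hsinhd : ∀ t : ℝ, HasDerivAt (fun u => Real.sinh (β * u)) (β * Real.cosh (β * t)) t := by
    intro t
    have h1 : HasDerivAt (fun u : ℝ => β * u) β t := by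
      simpa using (hasDerivAt_id t).const_mul β
    have h2 := (Real.hasDerivAt_sinh (β * t)).comp t h1
    rw [mul_comm] at h2
    exact h2
  set D : ℝ → ℝ := fun t => w t - w0 * Real.cosh (β * t) with hD_def
  set DW : ℝ → ℝ := fun t => W t - w0 * (β * Real.sinh (β * t)) with hDW_def
  have hDd : ∀ t, HasDerivAt D (DW t) t :=
    fun t => (hwd t).sub ((hcoshd t).const_mul w0)
  have hDWd : ∀ t, HasDerivAt DW
      (((a + 2 * K t) * w t - R t * W t) / (w t)^2 - w0 * (β * (β * Real.cosh (β * t)))) t :=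
    fun t => (hWd t).sub (((hsinhd t).const_mul β).const_mul w0)
  set P : ℝ → ℝ := fun t => DW t - β * D t with hP_def
  have hPd : ∀ t, HasDerivAt P
      ((((a + 2 * K t) * w t - R t * W t) / (w t)^2 - w0 * (β * (β * Real.cosh (β * t))))
        - β * DW t) t :=
    fun t => (hDWd t).sub ((hDd t).const_mul β)
  have hP0 : P 0 = 0 := by
    rw [hP_def, hDW_def, hD_def]
    simp [hW0, hw0_def]
  -- P ≥ 0 on t ≥ 0 via G = P * exp(β t)
  have hexpd : ∀ t : ℝ, HasDerivAt (fun u => Real.exp (β * u)) (β * Real.exp (β * t)) t := by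
    intro t
    have h1 : HasDerivAt (fun u : ℝ => β * u) β t := by
      simpa using (hasDerivAt_id t).const_mul β
    have h2 := (Real.hasDerivAt_exp (β * t)).comp t h1
    rw [mul_comm] at h2
    exact h2
  have hPnn : ∀ t, 0 ≤ t → 0 ≤ P t := by
    intro t ht
    have hGd : ∀ u, HasDerivAt (fun v => P v * Real.exp (β * v))
        (((((a + 2 * K u) * w u - R u * W u) / (w u)^2 - w0 * (β * (β * Real.cosh (β * u))))
          - β * DW u) * Real.exp (β * u) + P u * (β * Real.exp (β * u))) u :=
      fun u => (hPd u).mul (hexpd u)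
    have hG0 : P 0 * Real.exp (β * 0) = 0 := by rw [hP0]; ring
    have hGnn : 0 ≤ P t * Real.exp (β * t) := by
      apply pw_nonneg_on_Ici hGd (by rw [hG0]) _ ht
      intro u hu
      have hkey' := hkey u hu
      have hexp := Real.exp_pos (β * u)
      have hPval : ((((a + 2 * K u) * w u - R u * W u) / (w u)^2
            - w0 * (β * (β * Real.cosh (β * u)))) - β * DW u) * Real.exp (β * u)
            + P u * (β * Real.exp (β * u))
          = (((a + 2 * K u) * w u - R u * W u) / (w u)^2 - b * w u) * Real.exp (β * u) := by
        rw [hP_def, hDW_def, hD_def]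
        simp only
        rw [← hβsq]
        ring
      rw [hPval]
      have : 0 ≤ ((a + 2 * K u) * w u - R u * W u) / (w u)^2 - b * w u := by linarith
      positivity
    have := (mul_nonneg_iff_of_pos_right (Real.exp_pos (β * t))).mp hGnn
    exact this
  -- D ≥ 0 on t ≥ 0 via G2 = D * exp (-β t)
  have hexpd2 : ∀ t : ℝ, HasDerivAt (fun u => Real.exp (-β * u)) (-β * Real.exp (-β * t)) t := by
    intro t
    have h1 : HasDerivAt (fun u : ℝ => -β * u) (-β) t := by
      simpa using (hasDerivAt_id t).const_mul (-β)
    have h2 := (Real.hasDerivAt_exp (-β * t)).comp t h1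
    rw [mul_comm] at h2
    exact h2
  have hD0 : D 0 = 0 := by rw [hD_def]; simp [hw0_def]
  have hDnn : ∀ t, 0 ≤ t → 0 ≤ D t := by
    intro t ht
    have hG2d : ∀ u, HasDerivAt (fun v => D v * Real.exp (-β * v))
        (DW u * Real.exp (-β * u) + D u * (-β * Real.exp (-β * u))) u :=
      fun u => (hDd u).mul (hexpd2 u)
    have hG2nn : 0 ≤ D t * Real.exp (-β * t) := by
      apply pw_nonneg_on_Ici hG2d (by rw [hD0]; ring_nf; exact le_refl 0) _ ht
      intro u hu
      have hPu := hPnn u hu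
      have hexp := Real.exp_pos (-β * u)
      have hval : DW u * Real.exp (-β * u) + D u * (-β * Real.exp (-β * u))
          = P u * Real.exp (-β * u) := by
        rw [hP_def]
        simp only
        ring
      rw [hval]
      positivity
    exact (mul_nonneg_iff_of_pos_right (Real.exp_pos (-β * t))).mp hG2nn
  -- conclusion
  refine ⟨w0 / 4, by positivity, β, hβpos, ?_⟩
  intro t ht
  have hDt := hDnn t ht
  have hcosh : Real.exp (β * t) / 2 ≤ Real.cosh (β * t) := by
    rw [Real.cosh_eq]
    have := Real.exp_pos (-(β * t))
    linarith
  have hwt : w0 * Real.cosh (β * t) ≤ w t := by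
    rw [hD_def] at hDt
    simp only at hDt
    linarith
  have hexp := Real.exp_pos (β * t)
  calc w0 / 4 * Real.exp (β * t) < w0 / 2 * Real.exp (β * t) := by nlinarith
    _ = w0 * (Real.exp (β * t) / 2) := by ring
    _ ≤ w0 * Real.cosh (β * t) := by nlinarith
    _ ≤ w t := hwt
    _ = ‖Q t‖ := hwnorm t
end

section
/- Let A be self-adjoint on a complex Hilbert space H with spectral family {E_λ}, let Q₀ ∈ dom(A), and define ω² = ⟨Q₀, A Q₀⟩_H / ⟨Q₀, Q₀⟩_H. If ω² < 0, then for every α with 0 < α² < |ω²|, the spectral projection satisfies E_{-α²} Q₀ ≠ 0; consequently the solution of Q̈ = -A Q with initial data (Q₀, 0) satisfies lim_{t→∞} ‖Q̇_t‖² e^{-2αt} = ∞ for every α < |ω|. -/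
open scoped InnerProductSpace

private lemma re_inner_deriv {H : Type*} [NormedAddCommGroup H] [InnerProductSpace ℂ H]
    {f g : ℝ → H} {f' g' : H} {x : ℝ} (hf : HasDerivAt f f' x) (hg : HasDerivAt g g' x) :
    HasDerivAt (fun t => (⟪f t, g t⟫_ℂ).re) ((⟪f x, g'⟫_ℂ).re + (⟪f', g x⟫_ℂ).re) x := by
  have h := Complex.reCLM.hasFDerivAt.comp_hasDerivAt x (hf.inner ℂ hg)
  simp only [Function.comp_def, Complex.reCLM_apply, ContinuousLinearMap.coe_add', Pi.add_apply, Complex.add_re] at h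
  exact h

private lemma mono_help {f f' : ℝ → ℝ} (hd : ∀ t, HasDerivAt f (f' t) t) {a : ℝ}
    (h : ∀ t, a ≤ t → 0 ≤ f' t) {s t : ℝ} (has : a ≤ s) (hst : s ≤ t) : f s ≤ f t := by
  have hmono : MonotoneOn f (Set.Ici a) := by
    apply monotoneOn_of_deriv_nonneg (convex_Ici a)
    · exact fun x _ => (hd x).continuousAt.continuousWithinAt
    · exact fun x _ => (hd x).differentiableAt.differentiableWithinAt
    · intro x hx
      rw [(hd x).deriv]
      exact h x (le_of_lt (by simpa [interior_Ici] using hx))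
  exact hmono (Set.mem_Ici.2 has) (Set.mem_Ici.2 (has.trans hst)) hst

private lemma anti_help {f f' : ℝ → ℝ} (hd : ∀ t, HasDerivAt f (f' t) t) {a : ℝ}
    (h : ∀ t, t ≤ a → f' t ≤ 0) {s t : ℝ} (has : s ≤ a) (hst : t ≤ s) : f s ≤ f t := by
  have hmono : AntitoneOn f (Set.Iic a) := by
    apply antitoneOn_of_deriv_nonpos (convex_Iic a)
    · exact fun x _ => (hd x).continuousAt.continuousWithinAt
    · exact fun x _ => (hd x).differentiableAt.differentiableWithinAt
    · intro x hx
      rw [(hd x).deriv]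
      exact h x (le_of_lt (by simpa [interior_Iic] using hx))
  exact hmono (Set.mem_Iic.2 (hst.trans has)) (Set.mem_Iic.2 has) hst

set_option maxHeartbeats 4000000 in
/-- **Variational principle for instability (Theorem 2 of Prabhu–Wald, abstract form).**
Let `A` be self-adjoint on a complex Hilbert space with spectral family `{E λ}` (so that
`A ≥ λ` on the kernel of `E λ`), `Q₀ ∈ dom A` nonzero, and set
`ω² = ⟨Q₀, A Q₀⟩ / ⟨Q₀, Q₀⟩`.  If `ω² < 0`, then for every `α` with `0 < α² < |ω²|`
the spectral projection satisfies `E (-α²) Q₀ ≠ 0`; consequently the solution of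
`Q̈ = -A Q` with initial data `(Q₀, 0)` satisfies
`lim_{t→∞} ‖Q̇ t‖² e^{-2αt} = ∞` for every such `α < |ω|`. -/
theorem variational_principle_for_instability
    {H : Type*} [NormedAddCommGroup H] [InnerProductSpace ℂ H] [CompleteSpace H]
    (A : H →L[ℂ] H) (hA : IsSelfAdjoint A)
    (E : ℝ → H →L[ℂ] H)
    (hproj : ∀ l, IsIdempotentElem (E l) ∧ IsSelfAdjoint (E l))
    (hbound : ∀ (l : ℝ) (x : H), E l x = 0 → l * ‖x‖ ^ 2 ≤ (⟪x, A x⟫_ℂ).re)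
    (Q₀ : H) (hQ₀ : Q₀ ≠ 0)
    (ω2 : ℝ) (hω2 : ω2 = (⟪Q₀, A Q₀⟫_ℂ).re / ‖Q₀‖ ^ 2) (hneg : ω2 < 0)
    (Q Q' Q'' : ℝ → H)
    (hd1 : ∀ t, HasDerivAt Q (Q' t) t)
    (hd2 : ∀ t, HasDerivAt Q' (Q'' t) t)
    (h0 : Q 0 = Q₀) (h0' : Q' 0 = 0)
    (hode : ∀ t, Q'' t = -(A (Q t))) :
    (∀ α : ℝ, 0 < α → α ^ 2 < -ω2 → E (-α ^ 2) Q₀ ≠ 0) ∧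
    (∀ α : ℝ, 0 < α → α ^ 2 < -ω2 →
      Filter.Tendsto (fun t => ‖Q' t‖ ^ 2 * Real.exp (-2 * α * t))
        Filter.atTop Filter.atTop) := by
  have hQ0n : (0:ℝ) < ‖Q₀‖ ^ 2 := pow_pos (norm_pos_iff.mpr hQ₀) 2
  have hRe : (⟪Q₀, A Q₀⟫_ℂ).re = ω2 * ‖Q₀‖ ^ 2 := by
    rw [hω2]; field_simp
  constructor
  · intro α hα hα2 hE0
    have hb := hbound (-α ^ 2) Q₀ hE0
    rw [hRe] at hb
    nlinarith
  · intro α hα hα2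
    -- notation
    have hadj : ContinuousLinearMap.adjoint A = A := ContinuousLinearMap.isSelfAdjoint_iff'.mp hA
    have hsym : ∀ x y : H, ⟪A x, y⟫_ℂ = ⟪x, A y⟫_ℂ := by
      intro x y
      conv_lhs => rw [← hadj]
      exact ContinuousLinearMap.adjoint_inner_left A y x
    have hresymm : ∀ x y : H, (⟪y, x⟫_ℂ).re = (⟪x, y⟫_ℂ).re := by
      intro x y
      rw [← inner_conj_symm x y]
      exact Complex.conj_re _
    set c : ℝ := -(⟪Q₀, A Q₀⟫_ℂ).re with hc_def
    have hc : 0 < c := by rw [hc_def, hRe]; nlinarith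
    set F : ℝ → ℝ := fun t => (⟪Q t, Q t⟫_ℂ).re with hF_def
    set M : ℝ → ℝ := fun t => (⟪Q t, Q' t⟫_ℂ).re with hM_def
    set P : ℝ → ℝ := fun t => (⟪Q' t, Q' t⟫_ℂ).re with hP_def
    set Φ : ℝ → ℝ := fun t => (⟪Q t, A (Q t)⟫_ℂ).re with hΦ_def
    have hFval : ∀ t, F t = ‖Q t‖ ^ 2 := fun t => by
      exact inner_self_eq_norm_sq (𝕜 := ℂ) (Q t)
    have hPval : ∀ t, P t = ‖Q' t‖ ^ 2 := fun t => by
      exact inner_self_eq_norm_sq (𝕜 := ℂ) (Q' t)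
    -- derivatives
    have hFd : ∀ t, HasDerivAt F (2 * M t) t := by
      intro t
      have h := re_inner_deriv (hd1 t) (hd1 t)
      have : (⟪Q t, Q' t⟫_ℂ).re + (⟪Q' t, Q t⟫_ℂ).re = 2 * M t := by
        rw [hresymm (Q t) (Q' t), hM_def]; ring
      rw [this] at h; exact h
    have hAQd : ∀ t, HasDerivAt (fun t => A (Q t)) (A (Q' t)) t := fun t => by
      simpa [Function.comp_def] using (A.restrictScalars ℝ).hasFDerivAt.comp_hasDerivAt t (hd1 t)
    have hPd : ∀ t, HasDerivAt P ((⟪Q' t, Q'' t⟫_ℂ).re + (⟪Q'' t, Q' t⟫_ℂ).re) t := fun t =>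
      re_inner_deriv (hd2 t) (hd2 t)
    have hΦd : ∀ t, HasDerivAt Φ ((⟪Q t, A (Q' t)⟫_ℂ).re + (⟪Q' t, A (Q t)⟫_ℂ).re) t := fun t =>
      re_inner_deriv (hd1 t) (hAQd t)
    -- energy conservation
    have hEnd : ∀ t, HasDerivAt (fun t => P t + Φ t) 0 t := by
      intro t
      have h := (hPd t).add (hΦd t)
      have heq : (⟪Q' t, Q'' t⟫_ℂ).re + (⟪Q'' t, Q' t⟫_ℂ).re +
          ((⟪Q t, A (Q' t)⟫_ℂ).re + (⟪Q' t, A (Q t)⟫_ℂ).re) = 0 := by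
        rw [hode t, ← hsym (Q t) (Q' t)]
        simp only [inner_neg_left, inner_neg_right, Complex.neg_re]
        ring
      rw [heq] at h; exact h
    have hEnc : ∀ t, P t + Φ t = -c := by
      intro t
      have h := is_const_of_deriv_eq_zero (f := fun t => P t + Φ t)
        (fun x => (hEnd x).differentiableAt) (fun x => (hEnd x).deriv) t 0
      have hP0 : P 0 = 0 := by rw [hP_def]; simp [h0']
      have hΦ0 : Φ 0 = -c := by rw [hΦ_def]; simp [h0, hc_def]
      rw [h, hP0, hΦ0, zero_add]
    have hMd : ∀ t, HasDerivAt M (2 * P t + c) t := by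
      intro t
      have h := re_inner_deriv (hd1 t) (hd2 t)
      have heq : (⟪Q t, Q'' t⟫_ℂ).re + (⟪Q' t, Q' t⟫_ℂ).re = 2 * P t + c := by
        rw [hode t]
        simp only [inner_neg_right, Complex.neg_re]
        have e1 : (⟪Q' t, Q' t⟫_ℂ).re = P t := rfl
        have e2 : (⟪Q t, A (Q t)⟫_ℂ).re = Φ t := rfl
        rw [e1, e2]
        have h2 := hEnc t
        linarith
      rw [heq] at h; exact h
    -- basic positivity facts
    have hPnn : ∀ t, 0 ≤ P t := fun t => by rw [hPval]; positivity
    have hCS : ∀ t, M t ^ 2 ≤ F t * P t := by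
      intro t
      have h1 : |M t| ≤ ‖Q t‖ * ‖Q' t‖ := by
        refine le_trans ?_ (norm_inner_le_norm (𝕜 := ℂ) (Q t) (Q' t))
        rw [hM_def]
        exact Complex.abs_re_le_norm _
      calc M t ^ 2 = |M t| ^ 2 := (sq_abs _).symm
        _ ≤ (‖Q t‖ * ‖Q' t‖) ^ 2 := by
            apply pow_le_pow_left₀ (abs_nonneg _) h1
        _ = F t * P t := by rw [hFval, hPval]; ring
    have hM0 : M 0 = 0 := by rw [hM_def]; simp [h0']
    have hMnn : ∀ t, 0 ≤ t → 0 ≤ M t := by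
      intro t ht
      have := mono_help hMd (a := 0) (fun s _ => by nlinarith [hPnn s]) le_rfl ht
      rw [hM0] at this; exact this
    have hMglob : Monotone M := monotone_of_deriv_nonneg
      (fun x => (hMd x).differentiableAt)
      (fun x => by rw [(hMd x).deriv]; nlinarith [hPnn x])
    have hF0 : F 0 = ‖Q₀‖ ^ 2 := by rw [hFval, h0]
    have hFpos : ∀ t, 0 < F t := by
      intro t
      rcases le_total 0 t with h | h
      · have := mono_help hFd (a := 0) (fun s hs => by nlinarith [hMnn s hs]) le_rfl h
        rw [hF0] at this; linarith
      · have := anti_help hFd (a := 0)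
          (fun s hs => by nlinarith [hM0 ▸ hMglob hs]) le_rfl h
        rw [hF0] at this; linarith
    have hMlin : ∀ t, 0 ≤ t → c * t ≤ M t := by
      intro t ht
      have hg : ∀ s, HasDerivAt (fun u => M u - c * u) (2 * P s) s := by
        intro s
        have := (hMd s).sub ((hasDerivAt_id s).const_mul c)
        exact this.congr_deriv (by ring)
      have := mono_help hg (a := 0) (fun s _ => by nlinarith [hPnn s]) le_rfl ht
      simp [hM0] at this
      linarith
    have hFquad : ∀ t, 0 ≤ t → F 0 + c * t ^ 2 ≤ F t := by
      intro t ht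
      have hg : ∀ s, HasDerivAt (fun u => F u - c * u ^ 2) (2 * M s - c * (2 * s)) s := by
        intro s
        exact (hFd s).sub (((hasDerivAt_pow 2 s).const_mul c).congr_deriv (by ring))
      have := mono_help hg (a := 0)
        (fun s hs => by nlinarith [hMlin s hs]) le_rfl ht
      nlinarith [this]
    -- the Rayleigh-quotient Lyapunov function
    set V : ℝ → ℝ := fun t => (M t ^ 2 + c * F t) / F t ^ 2 with hV_def
    set Vd : ℝ → ℝ := fun t =>
      ((2 * M t * (2 * P t + c) + c * (2 * M t)) * F t ^ 2 -
          (M t ^ 2 + c * F t) * (2 * F t * (2 * M t))) / (F t ^ 2) ^ 2 with hVd_def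
    have hVd : ∀ t, HasDerivAt V (Vd t) t := by
      intro t
      refine HasDerivAt.congr_deriv (HasDerivAt.div
        (((hMd t).pow 2).add ((hFd t).const_mul c))
        ((hFd t).pow 2)
        (pow_ne_zero 2 (hFpos t).ne')) ?_
      rw [hVd_def]
      norm_num
    have hVmono : ∀ t, 0 ≤ t → V 0 ≤ V t := by
      intro t ht
      refine mono_help hVd (a := 0) ?_ le_rfl ht
      intro u hu
      simp only [hVd_def]
      apply div_nonneg _ (by positivity)
      have hnum : (2 * M u * (2 * P u + c) + c * (2 * M u)) * F u ^ 2 -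
          (M u ^ 2 + c * F u) * (2 * F u * (2 * M u)) =
          4 * M u * F u * (F u * P u - M u ^ 2) := by ring
      rw [hnum]
      exact mul_nonneg (mul_nonneg (mul_nonneg (by norm_num) (hMnn u hu))
        (hFpos u).le) (sub_nonneg.mpr (hCS u))
    have hV0 : V 0 = -ω2 := by
      have hv : V 0 = (M 0 ^ 2 + c * F 0) / F 0 ^ 2 := rfl
      rw [hv, hM0, hF0, hc_def, hRe]
      field_simp
      ring
    -- choose β strictly between α and sqrt(-ω2)
    set s := Real.sqrt (-ω2) with hs_def
    have hω2nn : (0:ℝ) ≤ -ω2 := by linarith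
    have hs2 : s ^ 2 = -ω2 := Real.sq_sqrt hω2nn
    have hsnn : 0 ≤ s := Real.sqrt_nonneg _
    have hαs : α < s := by rw [hs_def]; exact (Real.lt_sqrt hα.le).mpr hα2
    set β := (α + s) / 2 with hβ_def
    have hαβ : α < β := by rw [hβ_def]; linarith
    have hβs : β < s := by rw [hβ_def]; linarith
    have hβpos : 0 < β := by linarith
    have hβ2 : β ^ 2 < -ω2 := by
      rw [← hs2]
      have h1 : 0 ≤ β := hβpos.le
      exact pow_lt_pow_left₀ hβs h1 (by norm_num)
    set δ := -ω2 - β ^ 2 with hδ_def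
    have hδ : 0 < δ := by rw [hδ_def]; linarith
    set T := Real.sqrt (1 / δ) with hT_def
    have hT2 : T ^ 2 = 1 / δ := Real.sq_sqrt (by positivity)
    have hTnn : 0 ≤ T := Real.sqrt_nonneg _
    have hFbig : ∀ t, T ≤ t → c / δ ≤ F t := by
      intro t ht
      have ht0 : 0 ≤ t := hTnn.trans ht
      have h1 := hFquad t ht0
      have h2 : T ^ 2 ≤ t ^ 2 := pow_le_pow_left₀ hTnn ht 2
      rw [hT2] at h2
      rw [hF0] at h1
      have h3 : c * (1 / δ) ≤ c * t ^ 2 := mul_le_mul_of_nonneg_left h2 hc.le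
      calc c / δ = c * (1 / δ) := by ring
        _ ≤ c * t ^ 2 := h3
        _ ≤ F t := by linarith [hQ0n]
    have hMF : ∀ t, T ≤ t → β * F t ≤ M t := by
      intro t ht
      have ht0 : 0 ≤ t := hTnn.trans ht
      have hV := hVmono t ht0
      rw [hV0] at hV
      have hF2 : (0:ℝ) < F t ^ 2 := pow_pos (hFpos t) 2
      have hV' : -ω2 ≤ (M t ^ 2 + c * F t) / F t ^ 2 := hV
      have h1 : -ω2 * F t ^ 2 ≤ M t ^ 2 + c * F t := (le_div_iff₀ hF2).mp hV'
      have h2 : c ≤ δ * F t := by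
        have h := hFbig t ht
        rw [div_le_iff₀ hδ] at h
        linarith [mul_comm (F t) δ]
      have h2' : c * F t ≤ δ * F t ^ 2 := by
        calc c * F t ≤ δ * F t * F t := mul_le_mul_of_nonneg_right h2 (hFpos t).le
          _ = δ * F t ^ 2 := by ring
      have h4eq : -ω2 * F t ^ 2 = β ^ 2 * F t ^ 2 + δ * F t ^ 2 := by
        rw [hδ_def]; ring
      have h3 : (β * F t) ^ 2 ≤ M t ^ 2 := by
        have hb2 : β ^ 2 * F t ^ 2 ≤ M t ^ 2 := by linarith
        calc (β * F t) ^ 2 = β ^ 2 * F t ^ 2 := by ring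
          _ ≤ M t ^ 2 := hb2
      have hMt : 0 ≤ M t := hMnn t ht0
      by_contra hcon
      push_neg at hcon
      have hbF : 0 < β * F t := mul_pos hβpos (hFpos t)
      have hsum : 0 < M t + β * F t := by linarith
      have hprod : 0 < (β * F t - M t) * (M t + β * F t) :=
        mul_pos (by linarith) hsum
      have hexpand : (β * F t - M t) * (M t + β * F t) = (β * F t) ^ 2 - M t ^ 2 := by
        ring
      linarith
    -- exponential lower bound for F
    set W : ℝ → ℝ := fun t => F t * Real.exp (-(2 * β) * t) with hW_def
    have hWd : ∀ t, HasDerivAt W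
        (2 * M t * Real.exp (-(2 * β) * t) +
          F t * (Real.exp (-(2 * β) * t) * (-(2 * β)))) t := by
      intro t
      refine (hFd t).mul (HasDerivAt.congr_deriv (((hasDerivAt_id t).const_mul (-(2 * β))).exp) ?_)
      simp
    have hWlb : ∀ t, T ≤ t → W T ≤ W t := by
      intro t ht
      refine mono_help hWd (a := T) ?_ le_rfl ht
      intro u hu
      have h1 := hMF u hu
      have h2 := (Real.exp_pos (-(2 * β) * u)).le
      have h3 : 2 * M u * Real.exp (-(2 * β) * u) +
          F u * (Real.exp (-(2 * β) * u) * (-(2 * β))) =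
          Real.exp (-(2 * β) * u) * (2 * (M u - β * F u)) := by ring
      rw [h3]
      exact mul_nonneg h2 (by linarith)
    have hKpos : 0 < W T := by
      rw [hW_def]
      exact mul_pos (hFpos T) (Real.exp_pos _)
    -- conclusion
    have hlow : ∀ t, T ≤ t →
        β ^ 2 * W T * Real.exp ((2 * β - 2 * α) * t) ≤ ‖Q' t‖ ^ 2 * Real.exp (-2 * α * t) := by
      intro t ht
      have ht0 : 0 ≤ t := hTnn.trans ht
      have hFe : W T * Real.exp (2 * β * t) ≤ F t := by
        have h : W T ≤ F t * Real.exp (-(2 * β) * t) := hWlb t ht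
        have hepos := (Real.exp_pos (2 * β * t)).le
        have hzero : -(2 * β) * t + 2 * β * t = 0 := by ring
        have hee : Real.exp (-(2 * β) * t) * Real.exp (2 * β * t) = 1 := by
          rw [← Real.exp_add, hzero, Real.exp_zero]
        calc W T * Real.exp (2 * β * t)
            ≤ (F t * Real.exp (-(2 * β) * t)) * Real.exp (2 * β * t) :=
              mul_le_mul_of_nonneg_right h hepos
          _ = F t * (Real.exp (-(2 * β) * t) * Real.exp (2 * β * t)) := by ring
          _ = F t := by rw [hee, mul_one]
      have hPF : β ^ 2 * F t ≤ P t := by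
        have h1 := hMF t ht
        have h4 : (β * F t) ^ 2 ≤ F t * P t :=
          le_trans (pow_le_pow_left₀ (mul_nonneg hβpos.le (hFpos t).le) h1 2) (hCS t)
        have h5 : β ^ 2 * F t * F t ≤ P t * F t := by
          calc β ^ 2 * F t * F t = (β * F t) ^ 2 := by ring
            _ ≤ F t * P t := h4
            _ = P t * F t := by ring
        exact le_of_mul_le_mul_right h5 (hFpos t)
      have hsplit : Real.exp ((2 * β - 2 * α) * t) =
          Real.exp (2 * β * t) * Real.exp (-2 * α * t) := by
        rw [← Real.exp_add]; ring_nf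
      rw [← hPval t, hsplit]
      have he : (0:ℝ) ≤ Real.exp (-2 * α * t) := (Real.exp_pos _).le
      calc β ^ 2 * W T * (Real.exp (2 * β * t) * Real.exp (-2 * α * t))
          = (β ^ 2 * (W T * Real.exp (2 * β * t))) * Real.exp (-2 * α * t) := by ring
        _ ≤ (β ^ 2 * F t) * Real.exp (-2 * α * t) := by
            apply mul_le_mul_of_nonneg_right _ he
            apply mul_le_mul_of_nonneg_left hFe (by positivity)
        _ ≤ P t * Real.exp (-2 * α * t) := mul_le_mul_of_nonneg_right hPF he
    have hexp : Filter.Tendsto (fun t => β ^ 2 * W T * Real.exp ((2 * β - 2 * α) * t))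
        Filter.atTop Filter.atTop := by
      apply Filter.Tendsto.const_mul_atTop (by positivity)
      apply Real.tendsto_exp_atTop.comp
      apply Filter.Tendsto.const_mul_atTop (by linarith) Filter.tendsto_id
    refine Filter.tendsto_atTop_mono' Filter.atTop ?_ hexp
    filter_upwards [Filter.eventually_ge_atTop T] with t ht
    exact hlow t ht
end
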